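/- For every integer n ≥ 0, every integer k, and all reals x, y, the following four identities hold: (1) B_{n,p,q}^{(k)}(x) = Σ_{l=0}^{n} Σ_{m=0}^{n} (−1)^{n−m} · m! · S_2(n,m,x) · S_2(m,l,y) · C_{l,p,q}^{(k)}(y); (2) B_{n,p,q}^{(k)}(x) = Σ_{l=0}^{n} Σ_{m=0}^{n} (−1)^{n} · m! · S_2(n,m,x) · S_2(m,l,−y) · Ĉ_{l,p,q}^{(k)}(y); (3) C_{n,p,q}^{(k)}(x) = Σ_{l=0}^{n} Σ_{m=0}^{n} ((−1)^{n−m}/m!) · S_1(n,m,x) · S_1(m,l,y) · B_{l,p,q}^{(k)}(y); (4) Ĉ_{n,p,q}^{(k)}(x) = Σ_{l=0}^{n} Σ_{m=0}^{n} ((−1)^{n}/m!) · S_1(n,m,−x) · S_1(m,l,y) · B_{l,p,q}^{(k)}(y). -/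

import Mathlib

open Finset

/-- The `(p,q)`-integer `[m]_{p,q} = (p^m - q^m)/(p - q)`. -/
noncomputable def pqInt (p q : ℝ) (m : ℕ) : ℝ := (p ^ m - q ^ m) / (p - q)

/-- The exponential generating function `∑ f n * t^n / n!` of a sequence `f`. -/
noncomputable def egf (f : ℕ → ℝ) : PowerSeries ℝ :=
  PowerSeries.mk fun n => f n / n.factorial

/-- The power series `∑_{m ≥ 0} (1 - e^{-t})^m / [m+1]_{p,q}^k`
(which equals `Li_{k,p,q}(1 - e^{-t}) / (1 - e^{-t})`).
Since `(1 - e^{-t})^m` has order at least `m`, the `n`-th coefficient only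
receives contributions from `m ≤ n`. -/
noncomputable def pqBernSeries (p q : ℝ) (k : ℤ) : PowerSeries ℝ :=
  PowerSeries.mk fun n =>
    ∑ m ∈ Finset.range (n + 1),
      PowerSeries.coeff (R := ℝ) n ((1 - PowerSeries.rescale (-1) (PowerSeries.exp ℝ)) ^ m) /
        pqInt p q (m + 1) ^ k

/-- The unsigned Stirling numbers of the first kind, defined by the recurrence
`S1(n+1, m+1) = n * S1(n, m+1) + S1(n, m)`, so that
`x(x+1)⋯(x+n-1) = ∑_{m=0}^{n} S1(n,m) x^m`. -/
def stirling1 : ℕ → ℕ → ℕ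
  | 0, 0 => 1
  | 0, _ + 1 => 0
  | _ + 1, 0 => 0
  | n + 1, m + 1 => n * stirling1 n (m + 1) + stirling1 n m

/-- Carlitz's weighted Stirling numbers of the first kind,
`S1(n,m,x) = ∑_{i=0}^{n-m} binom(m+i,i) S1(n,m+i) x^i`. -/
noncomputable def stirling1W (n m : ℕ) (x : ℝ) : ℝ :=
  ∑ i ∈ Finset.range (n - m + 1), ((m + i).choose i : ℝ) * (stirling1 n (m + i) : ℝ) * x ^ i

/-- Carlitz's weighted Stirling numbers of the second kind,
`S2(n,m,x) = (1/m!) ∑_{j=0}^{m} (-1)^(m-j) binom(m,j) (x+j)^n`. -/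
noncomputable def stirling2W (n m : ℕ) (x : ℝ) : ℝ :=
  (1 / (m.factorial : ℝ)) *
    ∑ j ∈ Finset.range (m + 1), (-1 : ℝ) ^ (m - j) * (m.choose j : ℝ) * (x + j) ^ n

/-- The `(p,q)`-poly-Cauchy polynomials of the first kind. -/
noncomputable def pqCauchy1 (p q : ℝ) (k : ℤ) (x : ℝ) (n : ℕ) : ℝ :=
  ∑ m ∈ Finset.range (n + 1),
    (-1 : ℝ) ^ (n - m) * (stirling1 n m : ℝ) *
      ∑ l ∈ Finset.range (m + 1),
        (m.choose l : ℝ) * (-x) ^ l / pqInt p q (m - l + 1) ^ k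

/-- The `(p,q)`-poly-Cauchy polynomials of the second kind. -/
noncomputable def pqCauchy2 (p q : ℝ) (k : ℤ) (x : ℝ) (n : ℕ) : ℝ :=
  (-1 : ℝ) ^ n *
    ∑ m ∈ Finset.range (n + 1),
      (stirling1 n m : ℝ) *
        ∑ l ∈ Finset.range (m + 1),
          (m.choose l : ℝ) * (-x) ^ l / pqInt p q (m - l + 1) ^ k

lemma stirling1_eq_zero : ∀ {n m : ℕ}, n < m → stirling1 n m = 0 := by
  intro n
  induction n with
  | zero => intro m h; cases m with
    | zero => omega
    | succ m => rfl
  | succ n ih => intro m h; cases m with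
    | zero => omega
    | succ m =>
      show n * stirling1 n (m + 1) + stirling1 n m = 0
      rw [ih (by omega), ih (by omega)]; simp

lemma stirling1W_eq (N n m : ℕ) (hn : n ≤ N) (x : ℝ) :
    stirling1W n m x =
      ∑ i ∈ Finset.range (N + 1), ((m + i).choose i : ℝ) * (stirling1 n (m + i) : ℝ) * x ^ i := by
  rw [stirling1W]
  refine Finset.sum_subset (by intro i hi; simp only [Finset.mem_range] at *; omega) ?_
  intro i _ hi
  simp only [Finset.mem_range, not_lt] at hi
  rw [stirling1_eq_zero (show n < m + i by omega)]
  simp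

lemma stirling1W_eq_zero {n m : ℕ} (h : n < m) (x : ℝ) : stirling1W n m x = 0 := by
  rw [stirling1W_eq n n m le_rfl]
  refine Finset.sum_eq_zero fun i _ => ?_
  rw [stirling1_eq_zero (show n < m + i by omega)]; simp

lemma stirling1W_zero (m : ℕ) (x : ℝ) :
    stirling1W 0 m x = if m = 0 then 1 else 0 := by
  cases m with
  | zero => simp [stirling1W, stirling1]
  | succ m => rw [stirling1W_eq_zero (by omega)]; simp

lemma stirling1_succ (n m : ℕ) : stirling1 (n+1) (m+1) = n * stirling1 n (m+1) + stirling1 n m := rfl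

lemma stirling1W_succ_succ (n m : ℕ) (x : ℝ) :
    stirling1W (n+1) (m+1) x = stirling1W n m x + (n + x) * stirling1W n (m+1) x := by
  rw [stirling1W_eq (n+1) (n+1) (m+1) le_rfl, stirling1W_eq (n+1) n m (by omega),
    stirling1W_eq (n+1) n (m+1) (by omega)]
  have key : ∀ i ∈ Finset.range (n+2),
      ((m + 1 + i).choose i : ℝ) * (stirling1 (n+1) (m+1+i) : ℝ) * x ^ i =
      (n : ℝ) * (((m+1+i).choose i : ℝ) * (stirling1 n (m+1+i) : ℝ) * x ^ i)
      + ((m+1+i).choose i : ℝ) * (stirling1 n (m+i) : ℝ) * x ^ i := by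
    intro i _
    have : m + 1 + i = (m + i) + 1 := by omega
    rw [this, stirling1_succ n (m+i)]
    push_cast
    have : m + i + 1 = m + 1 + i := by omega
    rw [this]
    ring
  rw [Finset.sum_congr rfl key, Finset.sum_add_distrib, ← Finset.mul_sum]
  have main : ∑ i ∈ Finset.range (n+2), ((m+1+i).choose i : ℝ) * (stirling1 n (m+i) : ℝ) * x ^ i
      = (∑ i ∈ Finset.range (n+2), ((m + i).choose i : ℝ) * (stirling1 n (m + i) : ℝ) * x ^ i)
      + x * ∑ i ∈ Finset.range (n+2), ((m+1+i).choose i : ℝ) * (stirling1 n (m+1+i) : ℝ) * x ^ i := by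
    have expand : ∀ i ∈ Finset.range (n+2),
        ((m+1+i).choose i : ℝ) * (stirling1 n (m+i) : ℝ) * x ^ i =
        ((m + i).choose i : ℝ) * (stirling1 n (m + i) : ℝ) * x ^ i +
        (((m+1+i).choose i : ℝ) - ((m+i).choose i : ℝ)) * (stirling1 n (m+i) : ℝ) * x ^ i := by
      intro i _; ring
    rw [Finset.sum_congr rfl expand, Finset.sum_add_distrib]
    congr 1
    rw [Finset.mul_sum]
    rw [Finset.sum_range_succ' (fun i => (((m+1+i).choose i : ℝ) - ((m+i).choose i : ℝ)) * (stirling1 n (m+i) : ℝ) * x ^ i)]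
    rw [Finset.sum_range_succ (fun i => x * (((m+1+i).choose i : ℝ) * (stirling1 n (m+1+i) : ℝ) * x ^ i))]
    rw [stirling1_eq_zero (show n < m+1+(n+1) by omega)]
    simp only [Nat.cast_zero, mul_zero, zero_mul, add_zero, Nat.choose_zero_right]
    norm_num
    refine Finset.sum_congr rfl fun i _ => ?_
    have h1 : m + 1 + (i+1) = (m + 1 + i) + 1 := by omega
    have h2 : m + (i + 1) = m + 1 + i := by omega
    rw [h1, h2, Nat.choose_succ_succ (m+1+i) i]
    push_cast
    ring
  rw [main]; ring

/-- `St2 n m x = ∑_j (-1)^j C(m,j) (x+j)^n = (-1)^m m! S2W(n,m,x)`. -/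

noncomputable def St2 (n m : ℕ) (x : ℝ) : ℝ :=
  ∑ j ∈ Finset.range (m + 1), (-1 : ℝ) ^ j * (m.choose j : ℝ) * (x + j) ^ n

lemma St2_zero_right (n : ℕ) (x : ℝ) : St2 n 0 x = x ^ n := by
  simp [St2]

lemma St2_succ_left (n m : ℕ) (x : ℝ) :
    St2 (n+1) (m+1) x = (x + (m+1)) * St2 n (m+1) x - (m+1) * St2 n m x := by
  have ext : ∑ j ∈ Finset.range (m + 2), (-1 : ℝ) ^ j * (m.choose j : ℝ) * (x + j) ^ n = St2 n m x := by
    rw [Finset.sum_range_succ, Nat.choose_succ_self, St2]; simp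
  rw [St2, St2, ← ext, Finset.mul_sum, Finset.mul_sum, ← Finset.sum_sub_distrib]
  refine Finset.sum_congr rfl fun j hj => ?_
  simp only [Finset.mem_range] at hj
  have key : ((m + 1 - j : ℕ) : ℝ) * ((m+1).choose j : ℝ) = ((m:ℝ)+1) * (m.choose j : ℝ) := by
    push_cast [← Nat.cast_mul]
    rw_mod_cast [mul_comm, ← Nat.choose_mul_succ_eq m j, mul_comm]
  have hx : (x + j) ^ (n+1) = (x + j) ^ n * ((x + (m+1)) - ((m+1-j : ℕ) : ℝ)) := by
    have : ((m+1-j : ℕ) : ℝ) = (m:ℝ) + 1 - j := by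
      push_cast [Nat.cast_sub (by omega : j ≤ m + 1)]; ring
    rw [this, pow_succ]; ring
  rw [hx]
  linear_combination (-(-1:ℝ)^j * (x + (j:ℝ))^n) * key

lemma St2_succ_right (n m : ℕ) (x : ℝ) :
    St2 n (m+1) x = St2 n m x - St2 n m (x+1) := by
  have key : ∀ j ∈ Finset.range (m+2),
      (-1 : ℝ) ^ j * ((m+1).choose j : ℝ) * (x + j) ^ n =
      (if j ≤ m then (-1 : ℝ)^j * (m.choose j : ℝ) * (x + j)^n else 0)
      + (if 1 ≤ j then (-1:ℝ)^j * (m.choose (j-1) : ℝ) * (x + j)^n else 0) := by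
    intro j hj
    simp only [Finset.mem_range] at hj
    cases j with
    | zero => simp
    | succ j =>
      rw [Nat.choose_succ_succ]
      rcases Nat.lt_or_ge j m with h | h
      · rw [if_pos (by omega : j + 1 ≤ m), if_pos (by omega : 1 ≤ j + 1),
          Nat.add_sub_cancel]
        push_cast; ring
      · rw [if_neg (by omega : ¬ (j + 1 ≤ m)), if_pos (by omega : 1 ≤ j + 1),
          Nat.add_sub_cancel, Nat.choose_eq_zero_of_lt (by omega : m < j + 1)]
        push_cast; ring
  have h1 : ∑ j ∈ Finset.range (m+2),
      (if j ≤ m then (-1 : ℝ)^j * (m.choose j : ℝ) * (x + j)^n else 0) = St2 n m x := by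
    rw [Finset.sum_range_succ, if_neg (by omega : ¬ (m + 1 ≤ m)), add_zero, St2]
    refine Finset.sum_congr rfl fun j hj => ?_
    simp only [Finset.mem_range] at hj
    rw [if_pos (by omega : j ≤ m)]
  have h2 : ∑ j ∈ Finset.range (m+2),
      (if 1 ≤ j then (-1:ℝ)^j * (m.choose (j-1) : ℝ) * (x + j)^n else 0)
      = - St2 n m (x+1) := by
    rw [Finset.sum_range_succ', if_neg (by omega : ¬ (1 ≤ 0)), add_zero, St2,
      ← Finset.sum_neg_distrib]
    refine Finset.sum_congr rfl fun j hj => ?_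
    rw [if_pos (by omega : 1 ≤ j + 1), Nat.add_sub_cancel]
    push_cast
    ring
  rw [St2, Finset.sum_congr rfl key, Finset.sum_add_distrib, h1, h2]
  ring

lemma St2_shift (n m : ℕ) (x : ℝ) :
    St2 n m (x+1) = ∑ r ∈ Finset.range (n+1), (n.choose r : ℝ) * St2 r m x := by
  rw [St2]
  have key : ∀ j ∈ Finset.range (m+1),
      (-1:ℝ)^j * (m.choose j : ℝ) * (x + 1 + j)^n =
      ∑ r ∈ Finset.range (n+1), (n.choose r : ℝ) * ((-1:ℝ)^j * (m.choose j : ℝ) * (x + j)^r) := by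
    intro j _
    have hb : (x + 1 + (j:ℝ))^n = ((x + j) + 1)^n := by ring_nf
    rw [hb, add_pow, Finset.mul_sum]
    refine Finset.sum_congr rfl fun r _ => ?_
    ring
  rw [Finset.sum_congr rfl key, Finset.sum_comm]
  refine Finset.sum_congr rfl fun r _ => ?_
  rw [St2, Finset.mul_sum]

lemma St2_eq_zero : ∀ (m n : ℕ), n < m → ∀ (x : ℝ), St2 n m x = 0 := by
  intro m
  induction m with
  | zero => intro n h; omega
  | succ m ih =>
    intro n h x
    rw [St2_succ_right, St2_shift, Finset.sum_range_succ, Nat.choose_self]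
    have : ∀ r ∈ Finset.range n, (n.choose r : ℝ) * St2 r m x = 0 := by
      intro r hr
      simp only [Finset.mem_range] at hr
      rw [ih r (by omega) x, mul_zero]
    rw [Finset.sum_eq_zero this]
    simp

lemma neg_one_pow_sub {m j : ℕ} (h : j ≤ m) : ((-1 : ℝ)) ^ (m - j) = (-1) ^ m * (-1) ^ j := by
  have h2 : m - j + j = m := by omega
  calc ((-1:ℝ)) ^ (m-j) = (-1)^(m-j) * ((-1)^j * (-1)^j) := by
        rw [← mul_pow]; norm_num
    _ = (-1)^m * (-1)^j := by rw [← mul_assoc, ← pow_add, h2]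

lemma stirling2W_eq_St2 (n m : ℕ) (x : ℝ) :
    stirling2W n m x = (-1:ℝ)^m / (m.factorial : ℝ) * St2 n m x := by
  rw [stirling2W, St2, Finset.mul_sum, Finset.mul_sum]
  refine Finset.sum_congr rfl fun j hj => ?_
  simp only [Finset.mem_range] at hj
  rw [neg_one_pow_sub (by omega : j ≤ m)]
  ring

lemma St2_eq_stirling2W (n m : ℕ) (x : ℝ) :
    St2 n m x = (-1:ℝ)^m * (m.factorial : ℝ) * stirling2W n m x := by
  rw [stirling2W_eq_St2]
  have : (m.factorial : ℝ) ≠ 0 := Nat.cast_ne_zero.mpr m.factorial_ne_zero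
  field_simp
  have h4 : ((-1:ℝ))^m * (-1)^m = 1 := by rw [← mul_pow]; norm_num
  linear_combination (-St2 n m x) * h4

lemma stirling2W_eq_zero {n m : ℕ} (h : n < m) (x : ℝ) : stirling2W n m x = 0 := by
  rw [stirling2W_eq_St2, St2_eq_zero m n h x, mul_zero]

lemma stirling2W_zero_right (n : ℕ) (x : ℝ) : stirling2W n 0 x = x ^ n := by
  rw [stirling2W_eq_St2, St2_zero_right]; simp

lemma stirling2W_succ_succ (n m : ℕ) (x : ℝ) :
    stirling2W (n+1) (m+1) x = stirling2W n m x + (x + (m+1)) * stirling2W n (m+1) x := by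
  have hm : (m.factorial : ℝ) ≠ 0 := Nat.cast_ne_zero.mpr m.factorial_ne_zero
  have hm1 : ((m+1).factorial : ℝ) ≠ 0 := Nat.cast_ne_zero.mpr (m+1).factorial_ne_zero
  rw [stirling2W_eq_St2, stirling2W_eq_St2, stirling2W_eq_St2, St2_succ_left]
  rw [Nat.factorial_succ]
  push_cast
  field_simp
  ring

lemma stirling2W_zero_left (m : ℕ) (x : ℝ) :
    stirling2W 0 m x = if m = 0 then 1 else 0 := by
  cases m with
  | zero => simp [stirling2W]
  | succ m => rw [stirling2W_eq_zero (by omega)]; simp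

lemma stirling1W_succ_zero (n : ℕ) (x : ℝ) :
    stirling1W (n+1) 0 x = ((n : ℝ) + x) * stirling1W n 0 x := by
  rw [stirling1W_eq (n+1) (n+1) 0 le_rfl, stirling1W_eq (n+1) n 0 (by omega)]
  simp only [Nat.zero_add, Nat.choose_self, Nat.cast_one, one_mul]
  rw [Finset.sum_range_succ' (fun i => (stirling1 (n+1) i : ℝ) * x ^ i)]
  show (∑ i ∈ Finset.range (n+1), (stirling1 (n+1) (i+1) : ℝ) * x ^ (i+1))
      + (stirling1 (n+1) 0 : ℝ) * x ^ 0 = _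
  have h0 : (stirling1 (n+1) 0 : ℝ) = 0 := by
    show ((stirling1 (n+1) 0 : ℕ) : ℝ) = 0
    norm_cast
  rw [h0, zero_mul, add_zero]
  have key : ∀ i ∈ Finset.range (n+1), (stirling1 (n+1) (i+1) : ℝ) * x ^ (i+1)
      = (n:ℝ) * ((stirling1 n (i+1) : ℝ) * x ^ (i+1)) + x * ((stirling1 n i : ℝ) * x ^ i) := by
    intro i _
    rw [stirling1_succ]
    push_cast
    ring
  rw [Finset.sum_congr rfl key, Finset.sum_add_distrib, ← Finset.mul_sum, ← Finset.mul_sum]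
  have ha : ∑ i ∈ Finset.range (n+1), (stirling1 n (i+1) : ℝ) * x ^ (i+1)
      = ∑ i ∈ Finset.range (n+2), (stirling1 n i : ℝ) * x ^ i - (stirling1 n 0 : ℝ) * x ^ 0 := by
    rw [Finset.sum_range_succ' (fun i => (stirling1 n i : ℝ) * x ^ i) (n+1)]
    ring
  have hb : ∑ i ∈ Finset.range (n+2), (stirling1 n i : ℝ) * x ^ i
      = ∑ i ∈ Finset.range (n+1), (stirling1 n i : ℝ) * x ^ i := by
    rw [Finset.sum_range_succ, stirling1_eq_zero (show n < n+1 by omega)]; simp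
  have hc : (n:ℝ) * (stirling1 n 0 : ℝ) = 0 := by
    cases n with
    | zero => simp
    | succ n =>
      have : stirling1 (n+1) 0 = 0 := rfl
      rw [this]; simp
  rw [ha, hb]
  linear_combination (-1 : ℝ) * hc

lemma orth1 : ∀ (n j : ℕ) (y : ℝ),
    ∑ l ∈ Finset.range (n+1), (-1:ℝ)^l * stirling2W n l y * stirling1W l j y
      = if j = n then (-1:ℝ)^n else 0 := by
  intro n
  induction n with
  | zero =>
    intro j y
    simp [stirling2W_zero_left, stirling1W_zero]
  | succ n ih =>
    intro j y
    rw [Finset.sum_range_succ' (fun l => (-1:ℝ)^l * stirling2W (n+1) l y * stirling1W l j y)]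
    have key : ∀ l ∈ Finset.range (n+1),
        (-1:ℝ)^(l+1) * stirling2W (n+1) (l+1) y * stirling1W (l+1) j y
        = (-1:ℝ)^(l+1) * stirling2W n l y * stirling1W (l+1) j y
          + (-1:ℝ)^(l+1) * ((y + (l+1)) * stirling2W n (l+1) y) * stirling1W (l+1) j y := by
      intro l _
      rw [stirling2W_succ_succ]
      push_cast
      ring
    rw [Finset.sum_congr rfl key, Finset.sum_add_distrib]
    have shift : ∑ l ∈ Finset.range (n+1),
        (-1:ℝ)^(l+1) * ((y + (l+1)) * stirling2W n (l+1) y) * stirling1W (l+1) j y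
        = (∑ l ∈ Finset.range (n+1), (-1:ℝ)^l * ((y + l) * stirling2W n l y) * stirling1W l j y)
          - (y * stirling2W n 0 y) * stirling1W 0 j y := by
      have := Finset.sum_range_succ' (fun l => (-1:ℝ)^l * ((y + l) * stirling2W n l y) * stirling1W l j y) (n+1)
      have hlast := Finset.sum_range_succ (fun l => (-1:ℝ)^l * ((y + l) * stirling2W n l y) * stirling1W l j y) (n+1)
      rw [stirling2W_eq_zero (show n < n+1 by omega)] at hlast
      have h2 : ∑ l ∈ Finset.range (n+2), (-1:ℝ)^l * ((y + l) * stirling2W n l y) * stirling1W l j y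
          = ∑ l ∈ Finset.range (n+1), (-1:ℝ)^l * ((y + l) * stirling2W n l y) * stirling1W l j y := by
        rw [hlast]; simp
      rw [h2] at this
      push_cast at this ⊢
      linarith [this]
    have hz : stirling2W n 0 y = y ^ n := stirling2W_zero_right n y
    rw [shift, show stirling2W (n+1) 0 y = y^(n+1) from stirling2W_zero_right (n+1) y, hz]
    -- combine into single sum
    have comb : (∑ l ∈ Finset.range (n+1), (-1:ℝ)^(l+1) * stirling2W n l y * stirling1W (l+1) j y)
        + ((∑ l ∈ Finset.range (n+1), (-1:ℝ)^l * ((y + l) * stirling2W n l y) * stirling1W l j y)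
           - y * y ^ n * stirling1W 0 j y)
        + (-1:ℝ)^0 * (y^(n+1)) * stirling1W 0 j y
        = ∑ l ∈ Finset.range (n+1),
            (-1:ℝ)^l * stirling2W n l y * ((y + l) * stirling1W l j y - stirling1W (l+1) j y) := by
      have hterm : ∑ l ∈ Finset.range (n+1),
          ((-1:ℝ)^(l+1) * stirling2W n l y * stirling1W (l+1) j y
            + (-1:ℝ)^l * ((y + l) * stirling2W n l y) * stirling1W l j y)
          = ∑ l ∈ Finset.range (n+1),
            (-1:ℝ)^l * stirling2W n l y * ((y + l) * stirling1W l j y - stirling1W (l+1) j y) := by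
        refine Finset.sum_congr rfl fun l _ => ?_
        rw [pow_succ]
        ring
      rw [Finset.sum_add_distrib] at hterm
      rw [← hterm]
      ring
    rw [comb]
    cases j with
    | zero =>
      have : ∀ l ∈ Finset.range (n+1),
          (-1:ℝ)^l * stirling2W n l y * ((y + l) * stirling1W l 0 y - stirling1W (l+1) 0 y) = 0 := by
        intro l _
        rw [stirling1W_succ_zero]
        ring_nf
      rw [Finset.sum_eq_zero this]
      simp
    | succ j =>
      have : ∀ l ∈ Finset.range (n+1),
          (-1:ℝ)^l * stirling2W n l y * ((y + l) * stirling1W l (j+1) y - stirling1W (l+1) (j+1) y)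
          = -((-1:ℝ)^l * stirling2W n l y * stirling1W l j y) := by
        intro l _
        rw [stirling1W_succ_succ]
        ring
      rw [Finset.sum_congr rfl this, Finset.sum_neg_distrib, ih j y]
      rcases eq_or_ne j n with h | h
      · subst h; simp [pow_succ]
      · rw [if_neg h, if_neg (by omega : ¬ (j + 1 = n + 1))]
        simp

lemma orth1' (N n j : ℕ) (hn : n ≤ N) (y : ℝ) :
    ∑ l ∈ Finset.range (N+1), (-1:ℝ)^l * stirling2W n l y * stirling1W l j y
      = if j = n then (-1:ℝ)^n else 0 := by
  rw [← orth1 n j y]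
  symm
  refine Finset.sum_subset (by intro l hl; simp only [Finset.mem_range] at *; omega) ?_
  intro l _ hl
  simp only [Finset.mem_range, not_lt] at hl
  rw [stirling2W_eq_zero (show n < l by omega)]
  ring

lemma orth2 (n j : ℕ) (hj : j ≤ n) (y : ℝ) :
    ∑ l ∈ Finset.range (n+1), (-1:ℝ)^l * stirling1W n l y * stirling2W l j y
      = if j = n then (-1:ℝ)^n else 0 := by
  set M2 : Matrix (Fin (n+1)) (Fin (n+1)) ℝ :=
    fun i l => (-1:ℝ)^(i:ℕ) * (-1)^(l:ℕ) * stirling2W (i:ℕ) (l:ℕ) y with hM2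
  set M1 : Matrix (Fin (n+1)) (Fin (n+1)) ℝ :=
    fun l j => stirling1W (l:ℕ) (j:ℕ) y with hM1
  have hone : M2 * M1 = 1 := by
    ext i j'
    rw [Matrix.mul_apply]
    have conv : ∀ l : Fin (n+1), M2 i l * M1 l j' =
        (fun t : ℕ => (-1:ℝ)^(i:ℕ) *
          ((-1)^t * stirling2W (i:ℕ) t y * stirling1W t (j':ℕ) y)) (l:ℕ) := by
      intro l
      simp only [hM2, hM1]
      ring
    rw [Finset.sum_congr rfl (fun l _ => conv l),
      Fin.sum_univ_eq_sum_range (fun t : ℕ => (-1:ℝ)^(i:ℕ) *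
        ((-1)^t * stirling2W (i:ℕ) t y * stirling1W t (j':ℕ) y)) (n+1), ← Finset.mul_sum]
    rw [orth1' n (i:ℕ) (j':ℕ) (by omega) y]
    rcases eq_or_ne i j' with h | h
    · subst h
      rw [if_pos rfl, Matrix.one_apply_eq, ← mul_pow]
      norm_num
    · rw [if_neg (fun hc => h (Fin.ext hc.symm)), Matrix.one_apply_ne h, mul_zero]
  have hone' : M1 * M2 = 1 := mul_eq_one_comm.mp hone
  have hentry := congrFun (congrFun hone' ⟨n, by omega⟩) ⟨j, by omega⟩
  rw [Matrix.mul_apply] at hentry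
  have conv : ∀ l : Fin (n+1), M1 ⟨n, by omega⟩ l * M2 l ⟨j, by omega⟩ =
      (fun t : ℕ => (-1:ℝ)^j *
        ((-1)^t * stirling1W n t y * stirling2W t j y)) (l:ℕ) := by
    intro l
    simp only [hM1, hM2]
    ring
  rw [Finset.sum_congr rfl (fun l _ => conv l),
    Fin.sum_univ_eq_sum_range (fun t : ℕ => (-1:ℝ)^j *
      ((-1)^t * stirling1W n t y * stirling2W t j y)) (n+1), ← Finset.mul_sum] at hentry
  have hone_app : (1 : Matrix (Fin (n+1)) (Fin (n+1)) ℝ) ⟨n, by omega⟩ ⟨j, by omega⟩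
      = if j = n then 1 else 0 := by
    rcases eq_or_ne j n with h | h
    · subst h; rw [if_pos rfl]; exact Matrix.one_apply_eq _
    · rw [if_neg h, Matrix.one_apply_ne (fun hc => h (by simpa using (Fin.mk.injEq _ _ _ _ ▸ hc.symm)))]
  rw [hone_app] at hentry
  have sq : (-1:ℝ)^j * (-1)^j = 1 := by rw [← mul_pow]; norm_num
  calc ∑ l ∈ Finset.range (n+1), (-1:ℝ)^l * stirling1W n l y * stirling2W l j y
      = ((-1:ℝ)^j * (-1)^j) * ∑ l ∈ Finset.range (n+1), (-1:ℝ)^l * stirling1W n l y * stirling2W l j y := by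
        rw [sq, one_mul]
    _ = (-1:ℝ)^j * ((-1:ℝ)^j * ∑ l ∈ Finset.range (n+1), (-1:ℝ)^l * stirling1W n l y * stirling2W l j y) := by ring
    _ = (-1:ℝ)^j * (if j = n then 1 else 0) := by
        rw [← hentry]
    _ = if j = n then (-1:ℝ)^n else 0 := by
        rcases eq_or_ne j n with h | h
        · subst h; simp
        · simp [h]

lemma tri_swap (M : ℕ) (f : ℕ → ℕ → ℝ) (hf : ∀ l r, l < r → f l r = 0) :
    ∑ l ∈ Finset.range (M+1), ∑ r ∈ Finset.range (l+1), f l r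
      = ∑ r ∈ Finset.range (M+1), ∑ l ∈ Finset.range (M+1), f l r := by
  have step : ∀ l ∈ Finset.range (M+1),
      ∑ r ∈ Finset.range (l+1), f l r = ∑ r ∈ Finset.range (M+1), f l r := by
    intro l hl
    refine Finset.sum_subset (Finset.range_subset_range.mpr (by simp only [Finset.mem_range] at hl; omega)) ?_
    intro r _ hr
    exact hf l r (by simp only [Finset.mem_range, not_lt] at hr; omega)
  rw [Finset.sum_congr rfl step, Finset.sum_comm]

lemma sum_s1W (a : ℕ → ℝ) (n : ℕ) (x : ℝ) :
    ∑ m ∈ Finset.range (n+1), stirling1W n m x * a m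
    = ∑ j ∈ Finset.range (n+1), (stirling1 n j : ℝ) *
        ∑ l ∈ Finset.range (j+1), (j.choose l : ℝ) * x ^ l * a (j - l) := by
  have rhs1 : ∀ j ∈ Finset.range (n+1),
      (stirling1 n j : ℝ) * ∑ l ∈ Finset.range (j+1), (j.choose l : ℝ) * x ^ l * a (j - l)
      = ∑ m ∈ Finset.range (j+1), (stirling1 n j : ℝ) * (j.choose m : ℝ) * x ^ (j - m) * a m := by
    intro j _
    rw [Finset.mul_sum]
    rw [← Finset.sum_range_reflect (fun l => (stirling1 n j : ℝ) * ((j.choose l : ℝ) * x ^ l * a (j - l))) (j+1)]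
    refine Finset.sum_congr rfl fun m hm => ?_
    simp only [Finset.mem_range] at hm
    have h1 : j + 1 - 1 - m = j - m := by omega
    rw [h1]
    have h2 : j - (j - m) = m := by omega
    have h3 : j.choose (j - m) = j.choose m := Nat.choose_symm (by omega)
    rw [h2, h3]
    ring
  rw [Finset.sum_congr rfl rhs1]
  rw [tri_swap n (fun j m => (stirling1 n j : ℝ) * (j.choose m : ℝ) * x ^ (j - m) * a m)
    (fun j m h => by simp only [Nat.choose_eq_zero_of_lt h, Nat.cast_zero]; ring)]
  refine Finset.sum_congr rfl fun m hm => ?_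
  rw [stirling1W_eq n n m le_rfl, Finset.sum_mul]
  have left : ∀ i ∈ Finset.range (n+1),
      ((m + i).choose i : ℝ) * (stirling1 n (m + i) : ℝ) * x ^ i * a m
      = (fun j => (stirling1 n j : ℝ) * (j.choose m : ℝ) * x ^ (j - m) * a m) (m + i) := by
    intro i _
    have h1 : (m+i).choose m = (m+i).choose i := by
      rw [← Nat.choose_symm (by omega : i ≤ m + i), Nat.add_sub_cancel]
    have h2 : m + i - m = i := by omega
    simp only [h1, h2]
    ring
  rw [Finset.sum_congr rfl left]
  have hIco := Finset.sum_Ico_eq_sum_range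
    (fun j => (stirling1 n j : ℝ) * (j.choose m : ℝ) * x ^ (j - m) * a m) m (m+(n+1))
  rw [Nat.add_sub_cancel_left] at hIco
  rw [← hIco]
  symm
  have ext1 : ∑ j ∈ Finset.range (n+1), (stirling1 n j : ℝ) * (j.choose m : ℝ) * x ^ (j - m) * a m
      = ∑ j ∈ Finset.Ico m (n+1), (stirling1 n j : ℝ) * (j.choose m : ℝ) * x ^ (j - m) * a m := by
    symm
    refine Finset.sum_subset (by intro j hj; simp only [Finset.mem_Ico, Finset.mem_range] at *; omega) ?_
    intro j hj hj2
    simp only [Finset.mem_range, Finset.mem_Ico, not_and, not_le, not_lt] at hj hj2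
    rw [Nat.choose_eq_zero_of_lt (by omega : j < m)]
    simp
  rw [ext1]
  refine Finset.sum_subset (by intro j hj; simp only [Finset.mem_Ico] at *; omega) ?_
  intro j hj hj2
  simp only [Finset.mem_Ico, not_and, not_lt] at hj hj2
  rw [stirling1_eq_zero (show n < j by omega)]
  simp

lemma one_sub_exp_pow (m : ℕ) :
    (1 - PowerSeries.rescale (-1) (PowerSeries.exp ℝ)) ^ m
      = ∑ j ∈ Finset.range (m+1), ((-1:ℝ)^j * (m.choose j : ℝ)) •
          PowerSeries.rescale (-(j:ℝ)) (PowerSeries.exp ℝ) := by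
  have hE : ∀ j : ℕ, (PowerSeries.rescale (-1 : ℝ) (PowerSeries.exp ℝ))^j
      = PowerSeries.rescale (-(j:ℝ)) (PowerSeries.exp ℝ) := by
    intro j
    rw [← map_pow, PowerSeries.exp_pow_eq_rescale_exp, PowerSeries.rescale_rescale]
    norm_num
  rw [sub_eq_add_neg, add_comm, add_pow]
  refine Finset.sum_congr rfl fun j hj => ?_
  rw [neg_pow, one_pow, mul_one, hE j, PowerSeries.smul_eq_C_mul, map_mul, map_pow, map_neg,
    map_one, map_natCast]
  ring

lemma coeff_one_sub_exp_pow_mul (m n : ℕ) (x : ℝ) :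
    PowerSeries.coeff (R := ℝ) n ((1 - PowerSeries.rescale (-1) (PowerSeries.exp ℝ)) ^ m
        * PowerSeries.rescale (-x) (PowerSeries.exp ℝ))
      = (-1:ℝ)^n * St2 n m x / n.factorial := by
  rw [one_sub_exp_pow, Finset.sum_mul]
  have hterm : ∀ j ∈ Finset.range (m+1),
      (((-1:ℝ)^j * (m.choose j : ℝ)) • PowerSeries.rescale (-(j:ℝ)) (PowerSeries.exp ℝ))
        * PowerSeries.rescale (-x) (PowerSeries.exp ℝ)
      = ((-1:ℝ)^j * (m.choose j : ℝ)) •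
          PowerSeries.rescale (-(j:ℝ) + -x) (PowerSeries.exp ℝ) := by
    intro j _
    rw [smul_mul_assoc, PowerSeries.exp_mul_exp_eq_exp_add]
  rw [Finset.sum_congr rfl hterm, map_sum]
  rw [St2, Finset.mul_sum, Finset.sum_div]
  refine Finset.sum_congr rfl fun j hj => ?_
  rw [map_smul, smul_eq_mul, PowerSeries.coeff_rescale, PowerSeries.coeff_exp]
  have ha : (algebraMap ℚ ℝ) (1 / (n.factorial : ℚ)) = 1 / (n.factorial : ℝ) := by
    simp only [map_div₀, map_one, map_natCast]
  have hb : (-(j:ℝ) + -x)^n = (-1:ℝ)^n * (x+(j:ℝ))^n := by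
    rw [show -(j:ℝ) + -x = (-1)*(x+(j:ℝ)) by ring, mul_pow]
  rw [ha, hb]
  ring

lemma coeff_one_sub_exp_pow_eq_zero {u m : ℕ} (h : u < m) :
    PowerSeries.coeff (R := ℝ) u ((1 - PowerSeries.rescale (-1) (PowerSeries.exp ℝ)) ^ m) = 0 := by
  have hX : (PowerSeries.X : PowerSeries ℝ) ∣ (1 - PowerSeries.rescale (-1) (PowerSeries.exp ℝ)) := by
    rw [PowerSeries.X_dvd_iff]
    rw [map_sub, map_one]
    have : PowerSeries.constantCoeff (R := ℝ) (PowerSeries.rescale (-1) (PowerSeries.exp ℝ)) = 1 := by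
      rw [← PowerSeries.coeff_zero_eq_constantCoeff_apply, PowerSeries.coeff_rescale]
      simp [PowerSeries.coeff_exp]
    rw [this]; ring
  exact PowerSeries.X_pow_dvd_iff.mp (pow_dvd_pow_of_dvd hX m) u h

lemma B_closed_form (p q : ℝ) (k : ℤ) (B : ℝ → ℕ → ℝ)
    (hB : ∀ x : ℝ,
      pqBernSeries p q k * PowerSeries.rescale (-x) (PowerSeries.exp ℝ) = egf (B x))
    (n : ℕ) (x : ℝ) :
    B x n = (-1:ℝ)^n * ∑ m ∈ Finset.range (n+1),
      St2 n m x * (1 / pqInt p q (m+1) ^ k) := by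
  have h := congrArg (PowerSeries.coeff (R := ℝ) n) (hB x)
  rw [PowerSeries.coeff_mul] at h
  have hegf : PowerSeries.coeff (R := ℝ) n (egf (B x)) = B x n / n.factorial := by
    rw [egf, PowerSeries.coeff_mk]
  rw [hegf] at h
  have step1 : ∀ pr ∈ Finset.HasAntidiagonal.antidiagonal n,
      PowerSeries.coeff (R := ℝ) pr.1 (pqBernSeries p q k)
        * PowerSeries.coeff (R := ℝ) pr.2 (PowerSeries.rescale (-x) (PowerSeries.exp ℝ))
      = ∑ m ∈ Finset.range (n+1),
          (PowerSeries.coeff (R := ℝ) pr.1 ((1 - PowerSeries.rescale (-1) (PowerSeries.exp ℝ)) ^ m)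
            * PowerSeries.coeff (R := ℝ) pr.2 (PowerSeries.rescale (-x) (PowerSeries.exp ℝ)))
            * (1 / pqInt p q (m+1) ^ k) := by
    intro pr hpr
    have hpr1 : pr.1 ≤ n := by
      have := Finset.HasAntidiagonal.mem_antidiagonal.mp hpr; omega
    rw [pqBernSeries, PowerSeries.coeff_mk, Finset.sum_mul]
    rw [Finset.sum_subset (Finset.range_subset_range.mpr (by omega : pr.1 + 1 ≤ n + 1))
      (fun m _ hm => by
        rw [coeff_one_sub_exp_pow_eq_zero
          (show pr.1 < m by simp only [Finset.mem_range, not_lt] at hm; omega)]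
        simp)]
    refine Finset.sum_congr rfl fun m _ => ?_
    ring
  rw [Finset.sum_congr rfl step1, Finset.sum_comm] at h
  have step2 : ∀ m ∈ Finset.range (n+1),
      ∑ pr ∈ Finset.HasAntidiagonal.antidiagonal n,
        (PowerSeries.coeff (R := ℝ) pr.1 ((1 - PowerSeries.rescale (-1) (PowerSeries.exp ℝ)) ^ m)
          * PowerSeries.coeff (R := ℝ) pr.2 (PowerSeries.rescale (-x) (PowerSeries.exp ℝ)))
          * (1 / pqInt p q (m+1) ^ k)
      = ((-1:ℝ)^n * St2 n m x / n.factorial) * (1 / pqInt p q (m+1) ^ k) := by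
    intro m _
    rw [← Finset.sum_mul, ← PowerSeries.coeff_mul, coeff_one_sub_exp_pow_mul]
  rw [Finset.sum_congr rfl step2] at h
  have hn : (n.factorial : ℝ) ≠ 0 := Nat.cast_ne_zero.mpr n.factorial_ne_zero
  calc B x n = (B x n / n.factorial) * n.factorial := by field_simp
    _ = (∑ m ∈ Finset.range (n+1),
          ((-1:ℝ)^n * St2 n m x / n.factorial) * (1 / pqInt p q (m+1) ^ k)) * n.factorial := by
        rw [h]
    _ = (-1:ℝ)^n * ∑ m ∈ Finset.range (n+1), St2 n m x * (1 / pqInt p q (m+1) ^ k) := by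
        rw [Finset.sum_mul, Finset.mul_sum]
        refine Finset.sum_congr rfl fun m _ => ?_
        calc ((-1:ℝ)^n * St2 n m x / ↑n.factorial) * (1 / pqInt p q (m+1) ^ k) * ↑n.factorial
            = ((-1:ℝ)^n * (St2 n m x * (1 / pqInt p q (m+1)^k))) * (↑n.factorial / ↑n.factorial) := by
              ring
          _ = (-1:ℝ)^n * (St2 n m x * (1 / pqInt p q (m+1)^k)) := by rw [div_self hn, mul_one]

lemma pqCauchy1_eq (p q : ℝ) (k : ℤ) (x : ℝ) (n : ℕ) :
    pqCauchy1 p q k x n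
      = (-1:ℝ)^n * ∑ m ∈ Finset.range (n+1),
          stirling1W n m x * ((-1:ℝ)^m * (1 / pqInt p q (m+1) ^ k)) := by
  have key : (∑ m ∈ Finset.range (n+1), stirling1W n m x * ((-1:ℝ)^m * (1 / pqInt p q (m+1) ^ k)))
      = ∑ j ∈ Finset.range (n+1), (stirling1 n j : ℝ) *
          ∑ l ∈ Finset.range (j+1), (j.choose l : ℝ) * x ^ l *
            ((-1:ℝ)^(j-l) * (1 / pqInt p q ((j-l)+1) ^ k)) :=
    sum_s1W (fun r => (-1:ℝ)^r * (1 / pqInt p q (r+1)^k)) n x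
  rw [pqCauchy1, key, Finset.mul_sum]
  refine Finset.sum_congr rfl fun j hj => ?_
  simp only [Finset.mem_range] at hj
  simp only [Finset.mul_sum]
  refine Finset.sum_congr rfl fun l hl => ?_
  simp only [Finset.mem_range] at hl
  rw [neg_one_pow_sub (show j ≤ n by omega), neg_one_pow_sub (show l ≤ j by omega), neg_pow]
  ring

lemma pqCauchy2_eq (p q : ℝ) (k : ℤ) (x : ℝ) (n : ℕ) :
    pqCauchy2 p q k x n
      = (-1:ℝ)^n * ∑ m ∈ Finset.range (n+1),
          stirling1W n m (-x) * (1 / pqInt p q (m+1) ^ k) := by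
  have key : (∑ m ∈ Finset.range (n+1), stirling1W n m (-x) * (1 / pqInt p q (m+1) ^ k))
      = ∑ j ∈ Finset.range (n+1), (stirling1 n j : ℝ) *
          ∑ l ∈ Finset.range (j+1), (j.choose l : ℝ) * (-x) ^ l *
            (1 / pqInt p q ((j-l)+1) ^ k) :=
    sum_s1W (fun r => (1 / pqInt p q (r+1)^k)) n (-x)
  rw [pqCauchy2, key]
  congr 1
  refine Finset.sum_congr rfl fun j hj => ?_
  simp only [Finset.mul_sum]
  refine Finset.sum_congr rfl fun l hl => ?_
  ring

lemma inner1 (p q : ℝ) (k : ℤ) (m : ℕ) (y : ℝ) :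
    ∑ l ∈ Finset.range (m+1), stirling2W m l y * pqCauchy1 p q k y l
      = 1 / pqInt p q (m+1) ^ k := by
  have hterm : ∀ l ∈ Finset.range (m+1), stirling2W m l y * pqCauchy1 p q k y l
      = ∑ r ∈ Finset.range (l+1),
          ((-1:ℝ)^l * stirling2W m l y * stirling1W l r y)
            * ((-1:ℝ)^r * (1 / pqInt p q (r+1) ^ k)) := by
    intro l _
    rw [pqCauchy1_eq, Finset.mul_sum, Finset.mul_sum]
    refine Finset.sum_congr rfl fun r _ => ?_
    ring
  rw [Finset.sum_congr rfl hterm]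
  rw [tri_swap m _ (fun l r h => by rw [stirling1W_eq_zero h]; ring)]
  have hin : ∀ r ∈ Finset.range (m+1),
      ∑ l ∈ Finset.range (m+1),
        ((-1:ℝ)^l * stirling2W m l y * stirling1W l r y)
          * ((-1:ℝ)^r * (1 / pqInt p q (r+1) ^ k))
      = (if r = m then (-1:ℝ)^m else 0) * ((-1:ℝ)^r * (1 / pqInt p q (r+1) ^ k)) := by
    intro r _
    rw [← Finset.sum_mul, orth1 m r y]
  rw [Finset.sum_congr rfl hin]
  rw [Finset.sum_eq_single_of_mem m (Finset.self_mem_range_succ m)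
    (fun r _ hr => by rw [if_neg hr, zero_mul])]
  rw [if_pos rfl, ← mul_assoc, ← mul_pow]
  norm_num

lemma inner2 (p q : ℝ) (k : ℤ) (m : ℕ) (y : ℝ) :
    ∑ l ∈ Finset.range (m+1), stirling2W m l (-y) * pqCauchy2 p q k y l
      = (-1:ℝ)^m * (1 / pqInt p q (m+1) ^ k) := by
  have hterm : ∀ l ∈ Finset.range (m+1), stirling2W m l (-y) * pqCauchy2 p q k y l
      = ∑ r ∈ Finset.range (l+1),
          ((-1:ℝ)^l * stirling2W m l (-y) * stirling1W l r (-y))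
            * (1 / pqInt p q (r+1) ^ k) := by
    intro l _
    rw [pqCauchy2_eq, Finset.mul_sum, Finset.mul_sum]
    refine Finset.sum_congr rfl fun r _ => ?_
    ring
  rw [Finset.sum_congr rfl hterm]
  rw [tri_swap m _ (fun l r h => by rw [stirling1W_eq_zero h]; ring)]
  have hin : ∀ r ∈ Finset.range (m+1),
      ∑ l ∈ Finset.range (m+1),
        ((-1:ℝ)^l * stirling2W m l (-y) * stirling1W l r (-y))
          * (1 / pqInt p q (r+1) ^ k)
      = (if r = m then (-1:ℝ)^m else 0) * (1 / pqInt p q (r+1) ^ k) := by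
    intro r _
    rw [← Finset.sum_mul, orth1 m r (-y)]
  rw [Finset.sum_congr rfl hin]
  rw [Finset.sum_eq_single_of_mem m (Finset.self_mem_range_succ m)
    (fun r _ hr => by rw [if_neg hr, zero_mul])]
  rw [if_pos rfl]

lemma inner3 (p q : ℝ) (k : ℤ) (B : ℝ → ℕ → ℝ)
    (hB : ∀ x : ℝ,
      pqBernSeries p q k * PowerSeries.rescale (-x) (PowerSeries.exp ℝ) = egf (B x))
    (m : ℕ) (y : ℝ) :
    ∑ l ∈ Finset.range (m+1), stirling1W m l y * B y l
      = (m.factorial : ℝ) * (1 / pqInt p q (m+1) ^ k) := by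
  have hterm : ∀ l ∈ Finset.range (m+1), stirling1W m l y * B y l
      = ∑ r ∈ Finset.range (l+1),
          ((-1:ℝ)^l * stirling1W m l y * stirling2W l r y)
            * ((-1:ℝ)^r * (r.factorial : ℝ) * (1 / pqInt p q (r+1) ^ k)) := by
    intro l _
    rw [B_closed_form p q k B hB l y, Finset.mul_sum, Finset.mul_sum]
    refine Finset.sum_congr rfl fun r _ => ?_
    rw [St2_eq_stirling2W]
    ring
  rw [Finset.sum_congr rfl hterm]
  rw [tri_swap m _ (fun l r h => by rw [stirling2W_eq_zero h]; ring)]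
  have hin : ∀ r ∈ Finset.range (m+1),
      ∑ l ∈ Finset.range (m+1),
        ((-1:ℝ)^l * stirling1W m l y * stirling2W l r y)
          * ((-1:ℝ)^r * (r.factorial : ℝ) * (1 / pqInt p q (r+1) ^ k))
      = (if r = m then (-1:ℝ)^m else 0)
          * ((-1:ℝ)^r * (r.factorial : ℝ) * (1 / pqInt p q (r+1) ^ k)) := by
    intro r hr
    simp only [Finset.mem_range] at hr
    rw [← Finset.sum_mul, orth2 m r (by omega) y]
  rw [Finset.sum_congr rfl hin]
  rw [Finset.sum_eq_single_of_mem m (Finset.self_mem_range_succ m)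
    (fun r _ hr => by rw [if_neg hr, zero_mul])]
  rw [if_pos rfl, ← mul_assoc, ← mul_assoc, ← mul_pow]
  norm_num

theorem pqPolyBernoulli_pqPolyCauchy_relations
    (p q : ℝ) (hq : 0 < q) (hqp : q < p) (hp : p ≤ 1) (k : ℤ)
    (B : ℝ → ℕ → ℝ)
    (hB : ∀ x : ℝ,
      pqBernSeries p q k * PowerSeries.rescale (-x) (PowerSeries.exp ℝ) = egf (B x)) :
    ∀ (n : ℕ) (x y : ℝ),
      (B x n =
        ∑ l ∈ Finset.range (n + 1), ∑ m ∈ Finset.range (n + 1),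
          (-1 : ℝ) ^ (n - m) * (m.factorial : ℝ) * stirling2W n m x * stirling2W m l y *
            pqCauchy1 p q k y l) ∧
      (B x n =
        ∑ l ∈ Finset.range (n + 1), ∑ m ∈ Finset.range (n + 1),
          (-1 : ℝ) ^ n * (m.factorial : ℝ) * stirling2W n m x * stirling2W m l (-y) *
            pqCauchy2 p q k y l) ∧
      (pqCauchy1 p q k x n =
        ∑ l ∈ Finset.range (n + 1), ∑ m ∈ Finset.range (n + 1),
          ((-1 : ℝ) ^ (n - m) / (m.factorial : ℝ)) * stirling1W n m x * stirling1W m l y *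
            B y l) ∧
      (pqCauchy2 p q k x n =
        ∑ l ∈ Finset.range (n + 1), ∑ m ∈ Finset.range (n + 1),
          ((-1 : ℝ) ^ n / (m.factorial : ℝ)) * stirling1W n m (-x) * stirling1W m l y *
            B y l) := by
  intro n x y
  refine ⟨?_, ?_, ?_, ?_⟩
  · -- claim 1
    rw [Finset.sum_comm]
    have hterm : ∀ m ∈ Finset.range (n+1),
        (∑ l ∈ Finset.range (n+1),
          (-1 : ℝ) ^ (n - m) * (m.factorial : ℝ) * stirling2W n m x * stirling2W m l y *
            pqCauchy1 p q k y l)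
        = (-1 : ℝ) ^ (n - m) * (m.factorial : ℝ) * stirling2W n m x
            * (1 / pqInt p q (m+1) ^ k) := by
      intro m hm
      simp only [Finset.mem_range] at hm
      have e1 : ∀ l ∈ Finset.range (n+1),
          (-1 : ℝ) ^ (n - m) * (m.factorial : ℝ) * stirling2W n m x * stirling2W m l y *
            pqCauchy1 p q k y l
          = ((-1 : ℝ) ^ (n - m) * (m.factorial : ℝ) * stirling2W n m x)
              * (stirling2W m l y * pqCauchy1 p q k y l) := fun l _ => by ring
      rw [Finset.sum_congr rfl e1, ← Finset.mul_sum]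
      have e2 : ∑ l ∈ Finset.range (m+1), stirling2W m l y * pqCauchy1 p q k y l
          = ∑ l ∈ Finset.range (n+1), stirling2W m l y * pqCauchy1 p q k y l := by
        refine Finset.sum_subset (Finset.range_subset_range.mpr (by omega)) ?_
        intro l _ hl
        simp only [Finset.mem_range, not_lt] at hl
        rw [stirling2W_eq_zero (show m < l by omega)]
        ring
      rw [← e2, inner1]
    rw [Finset.sum_congr rfl hterm, B_closed_form p q k B hB n x, Finset.mul_sum]
    refine Finset.sum_congr rfl fun m hm => ?_
    simp only [Finset.mem_range] at hm
    rw [St2_eq_stirling2W, neg_one_pow_sub (show m ≤ n by omega)]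
    ring
  · -- claim 2
    rw [Finset.sum_comm]
    have hterm : ∀ m ∈ Finset.range (n+1),
        (∑ l ∈ Finset.range (n+1),
          (-1 : ℝ) ^ n * (m.factorial : ℝ) * stirling2W n m x * stirling2W m l (-y) *
            pqCauchy2 p q k y l)
        = (-1 : ℝ) ^ n * (m.factorial : ℝ) * stirling2W n m x
            * ((-1:ℝ)^m * (1 / pqInt p q (m+1) ^ k)) := by
      intro m hm
      simp only [Finset.mem_range] at hm
      have e1 : ∀ l ∈ Finset.range (n+1),
          (-1 : ℝ) ^ n * (m.factorial : ℝ) * stirling2W n m x * stirling2W m l (-y) *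
            pqCauchy2 p q k y l
          = ((-1 : ℝ) ^ n * (m.factorial : ℝ) * stirling2W n m x)
              * (stirling2W m l (-y) * pqCauchy2 p q k y l) := fun l _ => by ring
      rw [Finset.sum_congr rfl e1, ← Finset.mul_sum]
      have e2 : ∑ l ∈ Finset.range (m+1), stirling2W m l (-y) * pqCauchy2 p q k y l
          = ∑ l ∈ Finset.range (n+1), stirling2W m l (-y) * pqCauchy2 p q k y l := by
        refine Finset.sum_subset (Finset.range_subset_range.mpr (by omega)) ?_
        intro l _ hl
        simp only [Finset.mem_range, not_lt] at hl
        rw [stirling2W_eq_zero (show m < l by omega)]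
        ring
      rw [← e2, inner2]
    rw [Finset.sum_congr rfl hterm, B_closed_form p q k B hB n x, Finset.mul_sum]
    refine Finset.sum_congr rfl fun m hm => ?_
    rw [St2_eq_stirling2W]
    ring
  · -- claim 3
    rw [Finset.sum_comm]
    have hterm : ∀ m ∈ Finset.range (n+1),
        (∑ l ∈ Finset.range (n+1),
          ((-1 : ℝ) ^ (n - m) / (m.factorial : ℝ)) * stirling1W n m x * stirling1W m l y *
            B y l)
        = ((-1 : ℝ) ^ (n - m) / (m.factorial : ℝ)) * stirling1W n m x
            * ((m.factorial : ℝ) * (1 / pqInt p q (m+1) ^ k)) := by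
      intro m hm
      simp only [Finset.mem_range] at hm
      have e1 : ∀ l ∈ Finset.range (n+1),
          ((-1 : ℝ) ^ (n - m) / (m.factorial : ℝ)) * stirling1W n m x * stirling1W m l y *
            B y l
          = (((-1 : ℝ) ^ (n - m) / (m.factorial : ℝ)) * stirling1W n m x)
              * (stirling1W m l y * B y l) := fun l _ => by ring
      rw [Finset.sum_congr rfl e1, ← Finset.mul_sum]
      have e2 : ∑ l ∈ Finset.range (m+1), stirling1W m l y * B y l
          = ∑ l ∈ Finset.range (n+1), stirling1W m l y * B y l := by
        refine Finset.sum_subset (Finset.range_subset_range.mpr (by omega)) ?_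
        intro l _ hl
        simp only [Finset.mem_range, not_lt] at hl
        rw [stirling1W_eq_zero (show m < l by omega)]
        ring
      rw [← e2, inner3 p q k B hB]
    rw [Finset.sum_congr rfl hterm, pqCauchy1_eq, Finset.mul_sum]
    refine Finset.sum_congr rfl fun m hm => ?_
    simp only [Finset.mem_range] at hm
    have hf : (m.factorial : ℝ) ≠ 0 := Nat.cast_ne_zero.mpr m.factorial_ne_zero
    rw [neg_one_pow_sub (show m ≤ n by omega)]
    field_simp
    try ring
  · -- claim 4
    rw [Finset.sum_comm]
    have hterm : ∀ m ∈ Finset.range (n+1),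
        (∑ l ∈ Finset.range (n+1),
          ((-1 : ℝ) ^ n / (m.factorial : ℝ)) * stirling1W n m (-x) * stirling1W m l y *
            B y l)
        = ((-1 : ℝ) ^ n / (m.factorial : ℝ)) * stirling1W n m (-x)
            * ((m.factorial : ℝ) * (1 / pqInt p q (m+1) ^ k)) := by
      intro m hm
      simp only [Finset.mem_range] at hm
      have e1 : ∀ l ∈ Finset.range (n+1),
          ((-1 : ℝ) ^ n / (m.factorial : ℝ)) * stirling1W n m (-x) * stirling1W m l y *
            B y l
          = (((-1 : ℝ) ^ n / (m.factorial : ℝ)) * stirling1W n m (-x))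
              * (stirling1W m l y * B y l) := fun l _ => by ring
      rw [Finset.sum_congr rfl e1, ← Finset.mul_sum]
      have e2 : ∑ l ∈ Finset.range (m+1), stirling1W m l y * B y l
          = ∑ l ∈ Finset.range (n+1), stirling1W m l y * B y l := by
        refine Finset.sum_subset (Finset.range_subset_range.mpr (by omega)) ?_
        intro l _ hl
        simp only [Finset.mem_range, not_lt] at hl
        rw [stirling1W_eq_zero (show m < l by omega)]
        ring
      rw [← e2, inner3 p q k B hB]
    rw [Finset.sum_congr rfl hterm, pqCauchy2_eq, Finset.mul_sum]
    refine Finset.sum_congr rfl fun m hm => ?_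
    have hf : (m.factorial : ℝ) ≠ 0 := Nat.cast_ne_zero.mpr m.factorial_ne_zero
    field_simp
    try ring
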